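/- Let k ∈ ℝ and ε, r1 ∈ (0,1) with √ε·r1 ≤ 1. Set r4 = ε·r1² and w4 = log(1/r4), and assume r4 ≤ 1/e and that 1/(8·√r·(log(1/r))⁵) ≥ 100·max{|k|,1} for all r ∈ (0, r1]. Let c1 satisfy (1/32)·w4·ε·r1² ≤ c1 < w4, and let c2 satisfy 0 < c2 ≤ 1 and 2c2² ≤ c1. Then for every r ∈ (0, r4] and every σ ∈ [0,1], writing w = log(1/r), one has (2 / (r²·w^{2+2c2·σ}))·[ c1(c1+2)/(w − c1) + c1 − 2c2² ] ≥ 100·max{|k|,1}. -/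
import Mathlib


set_option maxHeartbeats 1000000 in
/-- the key lower bound for the dominant term of the scalar
curvature of the core drawstring piece. -/
theorem stmt_4 (k ε r1 c1 c2 : ℝ)
    (hε : ε ∈ Set.Ioo (0 : ℝ) 1) (hr1 : r1 ∈ Set.Ioo (0 : ℝ) 1)
    (hεr1 : Real.sqrt ε * r1 ≤ 1)
    (hr4 : ε * r1 ^ 2 ≤ 1 / Real.exp 1)
    (hsmall : ∀ r ∈ Set.Ioc (0 : ℝ) r1,
      1 / (8 * Real.sqrt r * (Real.log (1 / r)) ^ 5) ≥ 100 * max |k| 1)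
    (hc1l : (1 / 32) * Real.log (1 / (ε * r1 ^ 2)) * ε * r1 ^ 2 ≤ c1)
    (hc1u : c1 < Real.log (1 / (ε * r1 ^ 2)))
    (hc20 : 0 < c2) (hc21 : c2 ≤ 1) (hc2c1 : 2 * c2 ^ 2 ≤ c1) :
    ∀ r ∈ Set.Ioc (0 : ℝ) (ε * r1 ^ 2), ∀ σ ∈ Set.Icc (0 : ℝ) 1,
      (2 / (r ^ 2 * (Real.log (1 / r)) ^ (2 + 2 * c2 * σ))) *
          (c1 * (c1 + 2) / (Real.log (1 / r) - c1) + c1 - 2 * c2 ^ 2)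
        ≥ 100 * max |k| 1 := by
  obtain ⟨hε0, hε1⟩ := hε
  obtain ⟨hr10, hr11⟩ := hr1
  intro r hr σ hσ
  obtain ⟨hr0, hrr4⟩ := hr
  obtain ⟨hσ0, hσ1⟩ := hσ
  have hr40 : 0 < ε * r1 ^ 2 := by positivity
  have hr4r1 : ε * r1 ^ 2 ≤ r1 := by nlinarith
  have hw4 : (1:ℝ) ≤ Real.log (1 / (ε * r1 ^ 2)) := by
    rw [Real.log_div one_ne_zero (ne_of_gt hr40), Real.log_one]
    have h := Real.log_le_log hr40 hr4
    rw [Real.log_div one_ne_zero (Real.exp_ne_zero 1), Real.log_one, Real.log_exp] at h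
    linarith
  set w := Real.log (1 / r) with hwdef
  have hww4 : Real.log (1 / (ε * r1 ^ 2)) ≤ w := by
    apply Real.log_le_log (by positivity)
    exact one_div_le_one_div_of_le hr0 hrr4
  have hw1 : (1:ℝ) ≤ w := le_trans hw4 hww4
  have hw0 : (0:ℝ) < w := by linarith
  have hc10 : 0 < c1 := by nlinarith
  have hc1w : c1 < w := lt_of_lt_of_le hc1u hww4
  have hwc1 : 0 < w - c1 := by linarith
  have hM := hsmall r ⟨hr0, le_trans hrr4 hr4r1⟩
  have hsr0 : 0 < Real.sqrt r := Real.sqrt_pos.mpr hr0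
  have hr1' : r ≤ 1 := le_trans hrr4 (le_trans hr4r1 hr11.le)
  have hsq : Real.sqrt r ^ 2 = r := Real.sq_sqrt hr0.le
  have hsr : r ≤ Real.sqrt r := by nlinarith [hsq, hsr0, hr1']
  have hrc1 : r ≤ 32 * c1 := by nlinarith [hc1l, hw4, hrr4, hr40]
  set e := (2 + 2 * c2 * σ : ℝ) with hedef
  have hW0 : 0 < w ^ e := Real.rpow_pos_of_pos hw0 e
  have hWle : w ^ e ≤ w ^ (4:ℕ) := by
    have h4 : e ≤ ((4:ℕ):ℝ) := by push_cast; nlinarith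
    have h := Real.rpow_le_rpow_of_exponent_le hw1 h4
    rwa [Real.rpow_natCast] at h
  have hB : 2 * c1 / w ≤ c1 * (c1 + 2) / (w - c1) + c1 - 2 * c2 ^ 2 := by
    have h1 : 2 * c1 / w ≤ c1 * (c1 + 2) / (w - c1) := by
      rw [div_le_div_iff₀ hw0 hwc1]
      nlinarith [mul_pos (mul_pos hc10 hc10) hw0, mul_pos hc10 hc10]
    linarith
  have hkey : 100 * max |k| 1 ≤ 4 * c1 / (r ^ 2 * w ^ 5) := by
    have h2 : 1 / (8 * Real.sqrt r * w ^ 5) ≤ 4 * c1 / (r ^ 2 * w ^ 5) := by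
      rw [div_le_div_iff₀ (by positivity) (by positivity)]
      have hw5 : (0:ℝ) < w ^ 5 := by positivity
      nlinarith [mul_le_mul_of_nonneg_right hsr (le_of_lt hw5),
        mul_le_mul_of_nonneg_right (mul_le_mul_of_nonneg_right hrc1 hsr0.le) hw5.le,
        mul_pos hsr0 hw5]
    linarith [hM]
  have hBpos : 0 ≤ 2 * c1 / w := by positivity
  have hstep : 4 * c1 / (r ^ 2 * w ^ 5) ≤ 2 / (r ^ 2 * w ^ e) * (2 * c1 / w) := by
    have heq : 2 / (r ^ 2 * w ^ e) * (2 * c1 / w) = 4 * c1 / (r ^ 2 * (w ^ e * w)) := by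
      field_simp
      ring
    rw [heq]
    apply div_le_div_of_nonneg_left (by positivity) (by positivity)
    have h5 : w ^ e * w ≤ w ^ (4:ℕ) * w := mul_le_mul_of_nonneg_right hWle hw0.le
    have h6 : w ^ (4:ℕ) * w = w ^ 5 := by ring
    nlinarith [sq_nonneg r, mul_pos (mul_pos hr0 hr0) hw0]
  have hlast : 2 / (r ^ 2 * w ^ e) * (2 * c1 / w) ≤
      2 / (r ^ 2 * w ^ e) * (c1 * (c1 + 2) / (w - c1) + c1 - 2 * c2 ^ 2) := by
    apply mul_le_mul_of_nonneg_left hB (by positivity)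
  linarith [hkey, hstep, hlast]
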